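/- In the symmetric equilibrium of the all-pay auction with strictly increasing bid function β and i.i.d. valuations, a bidder with valuation v who bids β(w) for some w has expected utility U(v, w) = v Σ_{k=1}^I (F_{k:I-1}(w) − F_{k-1:I-1}(w)) M_k − c(β(w)), and truth-telling maximizes it: U(v, v) ≥ U(v, w) for all w ∈ [v_low, v_high], provided β satisfies the equilibrium ODE c'(β(w))β'(w) = w Σ_k (f_{k:I-1}(w) − f_{k-1:I-1}(w)) M_k with β(v_low) = 0 and the term G(w) := Σ_k (F_{k:I-1}(w) − F_{k-1:I-1}(w)) M_k is nondecreasing in w. -/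

import Mathlib

open MeasureTheory intervalIntegral

/-- Incentive compatibility of the symmetric equilibrium of the all-pay auction: if the
strictly increasing bid function `β` satisfies the equilibrium ODE
`c'(β(w)) β'(w) = w Σ_{k=1}^I (f_{k:I-1}(w) - f_{k-1:I-1}(w)) M_k` with `β(vlow) = 0`, and
`G(w) = Σ_k (F_{k:I-1}(w) - F_{k-1:I-1}(w)) M_k` is nondecreasing, then a bidder of type `v`
bidding `β(w)` gets `U(v,w) = v G(w) - c(β(w))`, and truth-telling is optimal:
`U(v,w) ≤ U(v,v)` for all `v, w ∈ [vlow, vhigh]`. -/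
theorem stmt12 (I : ℕ) (hI : 2 ≤ I) (vlow vhigh : ℝ) (hv : vlow < vhigh)
    (M : ℕ → ℝ) (hM : ∀ k ∈ Finset.Icc 1 (I - 1), M (k + 1) ≤ M k) (hMnn : ∀ k, 0 ≤ M k)
    (F f : ℕ → ℝ → ℝ) (hF0 : ∀ v, F 0 v = 0) (hf0 : ∀ v, f 0 v = 0)
    (hFderiv : ∀ k ∈ Finset.Icc 1 I, ∀ w ∈ Set.Icc vlow vhigh, HasDerivAt (F k) (f k w) w)
    (hfc : ∀ k ∈ Finset.Icc 1 I, ContinuousOn (f k) (Set.Icc vlow vhigh))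
    (c c' β β' : ℝ → ℝ)
    (hc : ∀ z, HasDerivAt c (c' z) z) (hc'c : Continuous c')
    (hβmono : StrictMonoOn β (Set.Icc vlow vhigh))
    (hβd : ∀ w ∈ Set.Icc vlow vhigh, HasDerivAt β (β' w) w)
    (hβ'c : ContinuousOn β' (Set.Icc vlow vhigh))
    (hODE : ∀ w ∈ Set.Icc vlow vhigh,
      c' (β w) * β' w = w * ∑ k ∈ Finset.Icc 1 I, (f k w - f (k - 1) w) * M k)
    (hβ0 : β vlow = 0)
    (G : ℝ → ℝ) (hG : ∀ w, G w = ∑ k ∈ Finset.Icc 1 I, (F k w - F (k - 1) w) * M k)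
    (hGmono : MonotoneOn G (Set.Icc vlow vhigh))
    (U : ℝ → ℝ → ℝ) (hU : ∀ v w, U v w = v * G w - c (β w)) :
    ∀ v ∈ Set.Icc vlow vhigh, ∀ w ∈ Set.Icc vlow vhigh, U v w ≤ U v v := by
  intro v hvm w hwm
  set g : ℝ → ℝ := fun x => ∑ k ∈ Finset.Icc 1 I, (f k x - f (k - 1) x) * M k with hgdef
  -- derivative of G
  have hGd : ∀ x ∈ Set.Icc vlow vhigh, HasDerivAt G (g x) x := by
    intro x hx
    have hGf : G = fun y => ∑ k ∈ Finset.Icc 1 I, (F k y - F (k - 1) y) * M k := funext hG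
    rw [hGf]
    apply HasDerivAt.fun_sum
    intro k hk
    have hFk : HasDerivAt (F k) (f k x) x := hFderiv k hk x hx
    have hFk1 : HasDerivAt (F (k - 1)) (f (k - 1) x) x := by
      rcases Finset.mem_Icc.mp hk with ⟨hk1, hkI⟩
      rcases eq_or_lt_of_le hk1 with h1 | h1
      · have hk0 : k - 1 = 0 := by omega
        rw [hk0, hf0]
        have hF0' : F 0 = fun _ => (0 : ℝ) := funext hF0
        rw [hF0']
        exact hasDerivAt_const x 0
      · exact hFderiv (k - 1) (Finset.mem_Icc.mpr ⟨by omega, by omega⟩) x hx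
    exact (hFk.sub hFk1).mul_const (M k)
  -- g is nonnegative on the interval, since G is monotone there
  have hgnn : ∀ x ∈ Set.Icc vlow vhigh, 0 ≤ g x := by
    intro x hx
    have hds : HasDerivWithinAt G (g x) (Set.Icc vlow vhigh) x :=
      (hGd x hx).hasDerivWithinAt
    rw [hasDerivWithinAt_iff_tendsto_slope] at hds
    have hslope : ∀ y ∈ Set.Icc vlow vhigh \ {x}, 0 ≤ slope G x y := by
      intro y hy
      rcases hy with ⟨hy1, hy2⟩
      rcases lt_or_gt_of_ne (Ne.symm hy2) with h | h
      · rw [slope_def_field]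
        exact div_nonneg (sub_nonneg.mpr (hGmono hx hy1 h.le)) (sub_nonneg.mpr h.le)
      · rw [slope_def_field]
        have h1 : G y - G x ≤ 0 := sub_nonpos.mpr (hGmono hy1 hx h.le)
        have h2 : y - x ≤ 0 := sub_nonpos.mpr h.le
        have := div_nonneg (neg_nonneg.mpr h1) (neg_nonneg.mpr h2)
        rwa [neg_div_neg_eq] at this
    rcases lt_or_ge x vhigh with hxh | hxh
    · have hsub : Set.Ioo x vhigh ⊆ Set.Icc vlow vhigh \ {x} := by
        intro y hy
        exact ⟨⟨le_trans hx.1 hy.1.le, hy.2.le⟩, fun h => absurd h.symm (ne_of_lt hy.1)⟩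
      have hne : Filter.NeBot (nhdsWithin x (Set.Ioo x vhigh)) := left_nhdsWithin_Ioo_neBot hxh
      have : Filter.Tendsto (slope G x) (nhdsWithin x (Set.Ioo x vhigh)) (nhds (g x)) :=
        hds.mono_left (nhdsWithin_mono x hsub)
      exact ge_of_tendsto this (Filter.eventually_of_mem self_mem_nhdsWithin
        fun y hy => hslope y (hsub hy))
    · have hxeq : x = vhigh := le_antisymm hx.2 hxh
      have hsub : Set.Ioo vlow x ⊆ Set.Icc vlow vhigh \ {x} := by
        intro y hy
        exact ⟨⟨hy.1.le, by rw [← hxeq]; exact hy.2.le⟩, fun h => absurd h (ne_of_lt hy.2)⟩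
      have hlx : vlow < x := hxeq ▸ hv
      have hne : Filter.NeBot (nhdsWithin x (Set.Ioo vlow x)) := right_nhdsWithin_Ioo_neBot hlx
      have : Filter.Tendsto (slope G x) (nhdsWithin x (Set.Ioo vlow x)) (nhds (g x)) :=
        hds.mono_left (nhdsWithin_mono x hsub)
      exact ge_of_tendsto this (Filter.eventually_of_mem self_mem_nhdsWithin
        fun y hy => hslope y (hsub hy))
  -- derivative of the utility in the report
  have hUf : (fun y => U v y) = fun y => v * G y - c (β y) := funext fun y => hU v y
  have hHd : ∀ x ∈ Set.Icc vlow vhigh,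
      HasDerivAt (fun y => U v y) ((v - x) * g x) x := by
    intro x hx
    rw [hUf]
    have h1 : HasDerivAt (fun y => v * G y) (v * g x) x := (hGd x hx).const_mul v
    have h2 : HasDerivAt (fun y => c (β y)) (c' (β x) * β' x) x :=
      (hc (β x)).comp x (hβd x hx)
    have := h1.sub h2
    have heq : v * g x - c' (β x) * β' x = (v - x) * g x := by
      rw [hODE x hx]; ring
    rw [heq] at this
    exact this
  have hHcont : ContinuousOn (fun y => U v y) (Set.Icc vlow vhigh) := fun x hx =>
    (hHd x hx).continuousAt.continuousWithinAt
  -- monotone below v, antitone above v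
  rcases le_total w v with hwv | hvw
  · have hmono : MonotoneOn (fun y => U v y) (Set.Icc vlow v) := by
      apply monotoneOn_of_deriv_nonneg (convex_Icc vlow v)
      · exact hHcont.mono (Set.Icc_subset_Icc le_rfl hvm.2)
      · intro x hx
        rw [interior_Icc] at hx
        have hx' : x ∈ Set.Icc vlow vhigh := ⟨hx.1.le, le_trans hx.2.le hvm.2⟩
        exact (hHd x hx').differentiableAt.differentiableWithinAt
      · intro x hx
        rw [interior_Icc] at hx
        have hx' : x ∈ Set.Icc vlow vhigh := ⟨hx.1.le, le_trans hx.2.le hvm.2⟩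
        rw [(hHd x hx').deriv]
        exact mul_nonneg (sub_nonneg.mpr hx.2.le) (hgnn x hx')
    exact hmono ⟨hwm.1, hwv⟩ ⟨hvm.1, le_rfl⟩ hwv
  · have hanti : AntitoneOn (fun y => U v y) (Set.Icc v vhigh) := by
      apply antitoneOn_of_deriv_nonpos (convex_Icc v vhigh)
      · exact hHcont.mono (Set.Icc_subset_Icc hvm.1 le_rfl)
      · intro x hx
        rw [interior_Icc] at hx
        have hx' : x ∈ Set.Icc vlow vhigh := ⟨le_trans hvm.1 hx.1.le, hx.2.le⟩
        exact (hHd x hx').differentiableAt.differentiableWithinAt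
      · intro x hx
        rw [interior_Icc] at hx
        have hx' : x ∈ Set.Icc vlow vhigh := ⟨le_trans hvm.1 hx.1.le, hx.2.le⟩
        rw [(hHd x hx').deriv]
        exact mul_nonpos_of_nonpos_of_nonneg (sub_nonpos.mpr hx.1.le) (hgnn x hx')
    exact hanti ⟨le_rfl, hvm.2⟩ ⟨hvw, hwm.2⟩ hvw
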